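/- arXiv:math/0004092 — 2 statements merged into one kernel-verified Lean document; each statement's English description precedes it below -/
import Mathlib

section
/- Let q be a primitive l-th root of unity with l odd. Then in A(SL_q(2)) the elements α = a^l, β = b^l, γ = c^l, δ = d^l are central: they commute with each of a, b, c, d. -/
noncomputable section
open scoped TensorProduct

/-- The free `ℂ`-algebra on four generators `a, b, c, d`. -/
abbrev FreeSL : Type := FreeAlgebra ℂ (Fin 4)

def Fa : FreeSL := FreeAlgebra.ι ℂ 0
def Fb : FreeSL := FreeAlgebra.ι ℂ 1
def Fc : FreeSL := FreeAlgebra.ι ℂ 2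
def Fd : FreeSL := FreeAlgebra.ι ℂ 3

/-- The defining relations of `A(SL_q(2))`. -/
inductive SLqRel (q : ℂ) : FreeSL → FreeSL → Prop
  | ab : SLqRel q (Fa * Fb) (q • (Fb * Fa))
  | ac : SLqRel q (Fa * Fc) (q • (Fc * Fa))
  | bd : SLqRel q (Fb * Fd) (q • (Fd * Fb))
  | bc : SLqRel q (Fb * Fc) (Fc * Fb)
  | cd : SLqRel q (Fc * Fd) (q • (Fd * Fc))
  | ad : SLqRel q (Fa * Fd - Fd * Fa) ((q - q⁻¹) • (Fb * Fc))
  | det : SLqRel q (Fa * Fd - q • (Fb * Fc)) 1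

/-- The quantum coordinate algebra `A(SL_q(2))`. -/
abbrev ASLq (q : ℂ) : Type := RingQuot (SLqRel q)

def aq (q : ℂ) : ASLq q := RingQuot.mkAlgHom ℂ (SLqRel q) Fa
def bq (q : ℂ) : ASLq q := RingQuot.mkAlgHom ℂ (SLqRel q) Fb
def cq (q : ℂ) : ASLq q := RingQuot.mkAlgHom ℂ (SLqRel q) Fc
def dq (q : ℂ) : ASLq q := RingQuot.mkAlgHom ℂ (SLqRel q) Fd

/-- The coefficients `p_{k,j}(q)`. -/
def pcoef (q : ℂ) (k j : ℕ) : ℂ :=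
  q ^ (j ^ 2) * (∏ r ∈ Finset.Icc (j + 1) k, (q ^ (2 * r) - 1)) /
    (∏ s ∈ Finset.Icc 1 (k - j), (q ^ (2 * s) - 1))


-- relation lemmas
lemma hab (q : ℂ) : aq q * bq q = q • (bq q * aq q) := by
  have := RingQuot.mkAlgHom_rel ℂ (SLqRel.ab (q := q))
  simpa [aq, bq, map_mul] using this

lemma hac (q : ℂ) : aq q * cq q = q • (cq q * aq q) := by
  have := RingQuot.mkAlgHom_rel ℂ (SLqRel.ac (q := q))
  simpa [aq, cq, map_mul] using this

lemma hbd (q : ℂ) : bq q * dq q = q • (dq q * bq q) := by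
  have := RingQuot.mkAlgHom_rel ℂ (SLqRel.bd (q := q))
  simpa [bq, dq, map_mul] using this

lemma hbc (q : ℂ) : bq q * cq q = cq q * bq q := by
  have := RingQuot.mkAlgHom_rel ℂ (SLqRel.bc (q := q))
  simpa [bq, cq, map_mul] using this

lemma hcd (q : ℂ) : cq q * dq q = q • (dq q * cq q) := by
  have := RingQuot.mkAlgHom_rel ℂ (SLqRel.cd (q := q))
  simpa [cq, dq, map_mul] using this

lemma had (q : ℂ) : aq q * dq q - dq q * aq q = (q - q⁻¹) • (bq q * cq q) := by
  have := RingQuot.mkAlgHom_rel ℂ (SLqRel.ad (q := q))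
  simpa [aq, bq, cq, dq, map_mul, map_sub] using this

-- generic q-commutation lemmas
lemma pow_mul_eq {A : Type*} [Ring A] [Algebra ℂ A] {x y : A} {s : ℂ}
    (h : x * y = s • (y * x)) (n : ℕ) : x ^ n * y = s ^ n • (y * x ^ n) := by
  induction n with
  | zero => simp
  | succ n ih =>
    rw [pow_succ, mul_assoc, h, mul_smul_comm, ← mul_assoc, ih, smul_mul_assoc,
      mul_assoc, ← pow_succ, smul_smul, ← pow_succ']

lemma flip_rel {A : Type*} [Ring A] [Algebra ℂ A] {x y : A} {s : ℂ}
    (hs : s ≠ 0) (h : x * y = s • (y * x)) : y * x = s⁻¹ • (x * y) := by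
  rw [h, smul_smul, inv_mul_cancel₀ hs, one_smul]

lemma commute_of_rel {A : Type*} [Ring A] [Algebra ℂ A] {x y : A} {s : ℂ} {l : ℕ}
    (h : x * y = s • (y * x)) (hs : s ^ l = 1) : Commute (x ^ l) y := by
  show x ^ l * y = y * x ^ l
  rw [pow_mul_eq h, hs, one_smul]

-- the hard induction
lemma pow_mul_gen {A : Type*} [Ring A] [Algebra ℂ A] (a d e : A) (t u : ℂ)
    (had : a * d = d * a + t • e) (hae : a * e = u • (e * a)) (k : ℕ) :
    a ^ (k + 1) * d = d * a ^ (k + 1) +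
      ((t * ∑ i ∈ Finset.range (k + 1), u ^ i)) • (e * a ^ k) := by
  induction k with
  | zero => simpa using had
  | succ k ih =>
    have h1 : a ^ (k + 2) * d = a ^ (k + 1) * (a * d) := by
      rw [← mul_assoc, ← pow_succ]
    rw [h1, had, mul_add, ← mul_assoc, ih, mul_smul_comm, pow_mul_eq hae,
      add_mul, smul_mul_assoc, mul_assoc, ← pow_succ, mul_assoc, ← pow_succ,
      add_assoc, smul_smul]
    congr 1
    rw [← add_smul]
    congr 1
    rw [Finset.sum_range_succ _ (k + 1), mul_add, mul_comm t (u ^ (k+1))]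

lemma q2_case {q : ℂ} {l : ℕ} (hq : IsPrimitiveRoot q l) (hl : Odd l)
    (h2 : q ^ 2 = 1) : q - q⁻¹ = 0 := by
  have hdvd : l ∣ 2 := hq.dvd_of_pow_eq_one 2 h2
  have hl1 : l = 1 := by
    have := Nat.le_of_dvd (by norm_num) hdvd
    interval_cases l
    · exact absurd hl (by decide)
    · rfl
    · exact absurd hl (by decide)
  subst hl1
  have hq1 : q = 1 := by simpa using hq.pow_eq_one
  simp [hq1]

lemma sum_zero {l : ℕ} {t u : ℂ} (hul : u ^ l = 1) (hu : u = 1 → t = 0) :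
    t * ∑ i ∈ Finset.range l, u ^ i = 0 := by
  by_cases h1 : u = 1
  · simp [hu h1]
  · rw [geom_sum_eq h1, hul, sub_self, zero_div, mul_zero]

/-- For `q` a primitive `l`-th root of unity, `l` odd, the elements
`a^l, b^l, c^l, d^l` are central: they commute with each of `a, b, c, d`. -/
theorem stmt4 (q : ℂ) (l : ℕ) (hq : IsPrimitiveRoot q l) (hl : Odd l) :
    ∀ x ∈ ({aq q, bq q, cq q, dq q} : Set (ASLq q)),
      ∀ y ∈ ({aq q, bq q, cq q, dq q} : Set (ASLq q)),
        Commute (x ^ l) y := by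
  set a := aq q with ha
  set b := bq q with hb
  set c := cq q with hc
  set d := dq q with hd
  have hlpos : 0 < l := hl.pos
  have hq0 : q ≠ 0 := hq.ne_zero hlpos.ne'
  have hql : q ^ l = 1 := hq.pow_eq_one
  have hqil : (q⁻¹) ^ l = 1 := by rw [inv_pow, hql, inv_one]
  -- easy commutation facts
  have Cab : Commute (a ^ l) b := commute_of_rel (hab q) hql
  have Cac : Commute (a ^ l) c := commute_of_rel (hac q) hql
  have Cba : Commute (b ^ l) a := commute_of_rel (flip_rel hq0 (hab q)) hqil
  have Cbd : Commute (b ^ l) d := commute_of_rel (hbd q) hql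
  have Cbc : Commute (b ^ l) c := ((show Commute b c from hbc q).pow_left l)
  have Ccb : Commute (c ^ l) b := ((show Commute c b from (hbc q).symm).pow_left l)
  have Cca : Commute (c ^ l) a := commute_of_rel (flip_rel hq0 (hac q)) hqil
  have Ccd : Commute (c ^ l) d := commute_of_rel (hcd q) hql
  have Cdb : Commute (d ^ l) b := commute_of_rel (flip_rel hq0 (hbd q)) hqil
  have Cdc : Commute (d ^ l) c := commute_of_rel (flip_rel hq0 (hcd q)) hqil
  -- the hard cases
  have habc : a * (b * c) = (q ^ 2) • (b * c * a) := by
    rw [← mul_assoc, hab, smul_mul_assoc, mul_assoc, hac, mul_smul_comm,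
      smul_smul, ← mul_assoc, ← sq]
  have hdbc : d * (b * c) = ((q⁻¹) ^ 2) • (b * c * d) := by
    rw [← mul_assoc, flip_rel hq0 (hbd q), smul_mul_assoc, mul_assoc,
      flip_rel hq0 (hcd q), mul_smul_comm, smul_smul, ← mul_assoc, ← sq]
  have ha_d : a * d = d * a + (q - q⁻¹) • (b * c) := by
    have := eq_add_of_sub_eq (had q)
    rw [this, add_comm]
  have hd_a : d * a = a * d + (q⁻¹ - q) • (b * c) := by
    have h := eq_add_of_sub_eq (had q)
    have hcancel : (q - q⁻¹) • (b * c) + (q⁻¹ - q) • (b * c) = 0 := by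
      rw [← add_smul, show (q - q⁻¹) + (q⁻¹ - q) = 0 by ring, zero_smul]
    rw [h, add_comm ((q - q⁻¹) • (bq q * cq q)) (dq q * aq q), add_assoc, hcancel, add_zero]
  obtain ⟨m, rfl⟩ : ∃ m, l = m + 1 := ⟨l - 1, (Nat.succ_pred_eq_of_pos hlpos).symm⟩
  have hq2l : (q ^ 2) ^ (m + 1) = 1 := by
    rw [← pow_mul, mul_comm, pow_mul, hql, one_pow]
  have hqi2l : ((q⁻¹) ^ 2) ^ (m + 1) = 1 := by
    rw [← pow_mul, mul_comm, pow_mul, hqil, one_pow]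
  have Cad : Commute (a ^ (m + 1)) d := by
    show a ^ (m + 1) * d = d * a ^ (m + 1)
    rw [pow_mul_gen a d (b * c) (q - q⁻¹) (q ^ 2) ha_d habc m,
      sum_zero hq2l (fun h1 => q2_case hq hl (by
        have : q ^ 2 = 1 := h1
        exact this)), zero_smul, add_zero]
  have Cda : Commute (d ^ (m + 1)) a := by
    show d ^ (m + 1) * a = a * d ^ (m + 1)
    rw [pow_mul_gen d a (b * c) (q⁻¹ - q) ((q⁻¹) ^ 2) hd_a hdbc m,
      sum_zero hqi2l (fun h1 => by
        have h2 : q ^ 2 = 1 := by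
          rw [inv_pow] at h1
          exact inv_eq_one.mp h1
        have h3 := q2_case hq hl h2
        linear_combination -h3), zero_smul, add_zero]
  have Caa : Commute (a ^ (m + 1)) a := (Commute.refl a).pow_left _
  have Cbb : Commute (b ^ (m + 1)) b := (Commute.refl b).pow_left _
  have Ccc : Commute (c ^ (m + 1)) c := (Commute.refl c).pow_left _
  have Cdd : Commute (d ^ (m + 1)) d := (Commute.refl d).pow_left _
  intro x hx y hy
  simp only [Set.mem_insert_iff, Set.mem_singleton_iff] at hx hy
  rcases hx with rfl | rfl | rfl | rfl <;> rcases hy with rfl | rfl | rfl | rfl <;>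
    assumption
end
end

section
/- Let q be a primitive l-th root of unity with l odd. In A(SL_q(2)), with α = a^l central, one has for 0 ≤ k ≤ l: a^{l-k} b^r c^s = q^{-k(r+s)} α · b^r c^s d^k − Σ_{j=1}^{k} p_{k,j}(q) a^{l-k} b^{r+j} c^{s+j}. -/
noncomputable section
open scoped TensorProduct

/-! ### Auxiliary relation lemmas in `ASLq q` -/

section Relations

variable (q : ℂ)

lemma rel_ab : aq q * bq q = q • (bq q * aq q) := by
  have := RingQuot.mkAlgHom_rel ℂ (SLqRel.ab (q := q))
  simpa [aq, bq, map_mul, map_smul] using this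

lemma rel_ac : aq q * cq q = q • (cq q * aq q) := by
  have := RingQuot.mkAlgHom_rel ℂ (SLqRel.ac (q := q))
  simpa [aq, cq, map_mul, map_smul] using this

lemma rel_bc : bq q * cq q = cq q * bq q := by
  have := RingQuot.mkAlgHom_rel ℂ (SLqRel.bc (q := q))
  simpa [bq, cq, map_mul] using this

lemma rel_det : aq q * dq q = 1 + q • (bq q * cq q) := by
  have := RingQuot.mkAlgHom_rel ℂ (SLqRel.det (q := q))
  simp only [map_sub, map_mul, map_smul, map_one] at this
  have h : aq q * dq q - q • (bq q * cq q) = 1 := by simpa [aq, bq, cq, dq] using this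
  linear_combination (norm := module) h

lemma a_pow_b (r : ℕ) : aq q * bq q ^ r = q ^ r • (bq q ^ r * aq q) := by
  induction r with
  | zero => simp
  | succ n ih =>
    rw [pow_succ, ← mul_assoc, ih]
    rw [smul_mul_assoc, mul_assoc, rel_ab, mul_smul_comm, smul_smul, pow_succ]
    rw [mul_assoc]

lemma a_pow_c (s : ℕ) : aq q * cq q ^ s = q ^ s • (cq q ^ s * aq q) := by
  induction s with
  | zero => simp
  | succ n ih =>
    rw [pow_succ, ← mul_assoc, ih]
    rw [smul_mul_assoc, mul_assoc, rel_ac, mul_smul_comm, smul_smul, pow_succ]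
    rw [mul_assoc]

lemma c_pow_b (s : ℕ) : cq q ^ s * bq q = bq q * cq q ^ s := by
  induction s with
  | zero => simp
  | succ n ih => rw [pow_succ, mul_assoc, ← rel_bc, ← mul_assoc, ih, mul_assoc]

lemma a_bc (r s : ℕ) :
    aq q * (bq q ^ r * cq q ^ s) = q ^ (r + s) • (bq q ^ r * cq q ^ s * aq q) := by
  rw [← mul_assoc, a_pow_b, smul_mul_assoc, mul_assoc, a_pow_c, mul_smul_comm, smul_smul,
    ← pow_add, ← mul_assoc]

lemma abcd (m n : ℕ) : aq q * (bq q ^ m * cq q ^ n) * dq q =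
    q ^ (m + n) • (bq q ^ m * cq q ^ n) + q ^ (m + n + 1) • (bq q ^ (m + 1) * cq q ^ (n + 1)) := by
  rw [a_bc, smul_mul_assoc, mul_assoc, rel_det, mul_add, mul_one, smul_add, mul_smul_comm,
    smul_smul, ← pow_succ]
  congr 2
  rw [pow_succ, pow_succ, mul_assoc (bq q ^ m) (cq q ^ n), ← mul_assoc (cq q ^ n), c_pow_b]
  simp [mul_assoc]

lemma step1 {l k : ℕ} (hk : k + 1 ≤ l) (m n : ℕ) :
    aq q ^ (l - k) * bq q ^ m * cq q ^ n * dq q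
      = q ^ (m + n) • (aq q ^ (l - (k + 1)) * bq q ^ m * cq q ^ n)
        + q ^ (m + n + 1) • (aq q ^ (l - (k + 1)) * bq q ^ (m + 1) * cq q ^ (n + 1)) := by
  have h : l - k = (l - (k + 1)) + 1 := by omega
  rw [h, pow_succ]
  have h2 : aq q ^ (l - (k + 1)) * aq q * bq q ^ m * cq q ^ n * dq q
      = aq q ^ (l - (k + 1)) * (aq q * (bq q ^ m * cq q ^ n) * dq q) := by
    simp [mul_assoc]
  rw [h2, abcd, mul_add, mul_smul_comm, mul_smul_comm]
  simp [mul_assoc]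

end Relations

/-! ### Auxiliary coefficient lemmas -/

section Coeffs

variable {q : ℂ} {l : ℕ} (hq : IsPrimitiveRoot q l) (hl : Odd l)
include hq hl

lemma factor_ne {s : ℕ} (hs : 0 < s) (hsl : s < l) : q ^ (2 * s) - 1 ≠ 0 := by
  rw [sub_ne_zero]
  intro h
  have : l ∣ 2 * s := (hq.pow_eq_one_iff_dvd _).mp h
  have hcop : Nat.Coprime l 2 := hl.coprime_two_right
  have : l ∣ s := (Nat.Coprime.dvd_of_dvd_mul_left hcop this)
  exact absurd (Nat.le_of_dvd hs this) (by omega)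

lemma prod_ne {m : ℕ} (hm : m < l) : (∏ s ∈ Finset.Icc 1 m, (q ^ (2 * s) - 1)) ≠ 0 := by
  rw [Finset.prod_ne_zero_iff]
  intro s hs
  rw [Finset.mem_Icc] at hs
  exact factor_ne hq hl (by omega) (by omega)

lemma pcoef_zero {k : ℕ} (hk : k < l) : pcoef q k 0 = 1 := by
  simp only [pcoef, Nat.sub_zero, zero_add, show (0 : ℕ) ^ 2 = 0 from rfl, pow_zero, one_mul]
  exact div_self (prod_ne hq hl hk)

omit hq hl in
lemma pcoef_diag (k : ℕ) : pcoef q (k + 1) (k + 1) = q ^ (2 * k + 1) * pcoef q k k := by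
  simp only [pcoef, Nat.sub_self, show Finset.Icc (k + 1 + 1) (k + 1) = ∅ from
    Finset.Icc_eq_empty (by omega), show Finset.Icc (k + 1) k = ∅ from
    Finset.Icc_eq_empty (by omega), Finset.prod_empty,
    show Finset.Icc 1 0 = ∅ from Finset.Icc_eq_empty (by omega)]
  rw [div_one, div_one, mul_one, mul_one, ← pow_add]
  congr 1
  ring

lemma pcoef_rec {i k : ℕ} (hik : i + 1 ≤ k) (hkl : k < l) :
    pcoef q (k + 1) (i + 1) =
      q ^ (2 * (i + 1)) * pcoef q k (i + 1) + q ^ (2 * i + 1) * pcoef q k i := by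
  obtain ⟨m, rfl⟩ : ∃ m, k = i + m + 1 := ⟨k - i - 1, by omega⟩
  simp only [pcoef]
  rw [show i + m + 1 + 1 - (i + 1) = m + 1 from by omega,
      show i + m + 1 - (i + 1) = m from by omega,
      show i + m + 1 - i = m + 1 from by omega,
      show Finset.Icc (i + 1 + 1) (i + m + 1 + 1) = Finset.Icc (i + 2) (i + m + 1 + 1) from by
        norm_num,
      Finset.prod_Icc_succ_top (show i + 2 ≤ i + m + 1 + 1 from by omega),
      Finset.prod_Icc_succ_top (show 1 ≤ m + 1 from by omega)]
  rw [show Finset.Icc (i + 1) (i + m + 1) = Finset.Ico (i + 1) (i + m + 2) from by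
        rw [← Finset.Ico_add_one_right_eq_Icc]; rfl,
      Finset.prod_eq_prod_Ico_succ_bot (by omega), show i + m + 2 = i + m + 1 + 1 from rfl,
      Finset.Ico_add_one_right_eq_Icc,
      show i + 1 + 1 = i + 2 from rfl]
  have h1 : (∏ s ∈ Finset.Icc 1 m, (q ^ (2 * s) - 1)) ≠ 0 := prod_ne hq hl (by omega)
  have h2 : q ^ (2 * (m + 1)) - 1 ≠ 0 := factor_ne hq hl (by omega) (by omega)
  field_simp
  ring

omit hq hl in
lemma icc_sum_eq {M : Type*} [AddCommMonoid M] (n : ℕ) (f : ℕ → M) :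
    ∑ j ∈ Finset.Icc 1 n, f j = ∑ i ∈ Finset.range n, f (i + 1) := by
  rw [← Finset.Ico_add_one_right_eq_Icc, Finset.sum_Ico_eq_sum_range]
  simp [Nat.add_comm]

/-- Sum combination using the `pcoef` recurrence. -/
lemma sum_comb {M : Type*} [AddCommGroup M] [Module ℂ M] {k : ℕ} (hk : k + 1 ≤ l)
    (T : ℕ → M) :
    ∑ i ∈ Finset.range (k + 1), pcoef q (k + 1) (i + 1) • T (i + 1)
      = ∑ i ∈ Finset.range k,
          ((q ^ (2 * (i + 1)) * pcoef q k (i + 1)) • T (i + 1)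
            + (q ^ (2 * i + 3) * pcoef q k (i + 1)) • T (i + 2)) + q • T 1 := by
  rw [Finset.sum_range_succ, pcoef_diag]
  have hmain : ∑ i ∈ Finset.range k, pcoef q (k + 1) (i + 1) • T (i + 1)
      = ∑ i ∈ Finset.range k,
          ((q ^ (2 * (i + 1)) * pcoef q k (i + 1)) • T (i + 1)
            + (q ^ (2 * i + 1) * pcoef q k i) • T (i + 1)) := by
    refine Finset.sum_congr rfl fun i hi => ?_
    rw [Finset.mem_range] at hi
    rw [pcoef_rec hq hl (by omega) (by omega), add_smul]
  rw [hmain, Finset.sum_add_distrib]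
  have hg : ∑ i ∈ Finset.range k, (q ^ (2 * i + 1) * pcoef q k i) • T (i + 1)
        + (q ^ (2 * k + 1) * pcoef q k k) • T (k + 1)
      = q • T 1 + ∑ i ∈ Finset.range k, (q ^ (2 * i + 3) * pcoef q k (i + 1)) • T (i + 2) := by
    rw [← Finset.sum_range_succ (fun i => (q ^ (2 * i + 1) * pcoef q k i) • T (i + 1)),
      Finset.sum_range_succ', add_comm]
    refine congrArg₂ (· + ·) ?_ ?_
    · rw [pcoef_zero hq hl (by omega), mul_one, pow_one]
    · refine Finset.sum_congr rfl fun i hi => ?_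
      rw [show 2 * (i + 1) + 1 = 2 * i + 3 from by ring, show i + 1 + 1 = i + 2 from by omega]
  rw [add_assoc, hg, Finset.sum_add_distrib]
  abel

lemma q_ne_zero' : q ≠ 0 := by
  have hl0 : l ≠ 0 := by rcases hl with ⟨t, ht⟩; omega
  exact hq.ne_zero hl0

lemma final_eq {M : Type*} [AddCommGroup M] [Module ℂ M] {k : ℕ} (hk : k + 1 ≤ l)
    (r s : ℕ) (P : M) (T : ℕ → M) :
    (q ^ (r + s))⁻¹ • ((q ^ (-(k * (r + s) : ℤ))) • P
        - ∑ j ∈ Finset.Icc 1 k, pcoef q k j •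
            (q ^ (r + j + (s + j)) • T j + q ^ (r + j + (s + j) + 1) • T (j + 1)))
      - q • T 1
    = (q ^ (-((k + 1) * (r + s) : ℤ))) • P
        - ∑ j ∈ Finset.Icc 1 (k + 1), pcoef q (k + 1) j • T j := by
  have hq0 : q ≠ 0 := q_ne_zero' hq hl
  rw [smul_sub, smul_smul, Finset.smul_sum]
  rw [icc_sum_eq, icc_sum_eq, sum_comb hq hl hk T]
  have hP : (q ^ (r + s))⁻¹ * q ^ (-(k * (r + s) : ℤ)) = q ^ (-((k + 1) * (r + s) : ℤ)) := by
    rw [show ((q : ℂ) ^ (r + s))⁻¹ = q ^ (-((r + s : ℕ) : ℤ)) from by rw [zpow_neg, zpow_natCast],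
      ← zpow_add₀ hq0]
    congr 1
    push_cast
    ring
  rw [hP]
  have hterm : ∀ i ∈ Finset.range k,
      (q ^ (r + s))⁻¹ • (pcoef q k (i + 1) •
        (q ^ (r + (i + 1) + (s + (i + 1))) • T (i + 1)
          + q ^ (r + (i + 1) + (s + (i + 1)) + 1) • T (i + 1 + 1)))
      = (q ^ (2 * (i + 1)) * pcoef q k (i + 1)) • T (i + 1)
          + (q ^ (2 * i + 3) * pcoef q k (i + 1)) • T (i + 2) := by
    intro i _
    simp only [smul_add, smul_smul]
    refine congrArg₂ (· + ·) ?_ ?_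
    · congr 1
      rw [show r + (i + 1) + (s + (i + 1)) = (r + s) + 2 * (i + 1) from by ring, pow_add]
      field_simp
      ring
    · rw [show i + 1 + 1 = i + 2 from by omega]
      congr 1
      rw [show r + (i + 1) + (s + (i + 1)) + 1 = (r + s) + (2 * i + 3) from by ring, pow_add]
      field_simp
      ring
  rw [Finset.sum_congr rfl hterm]
  abel

end Coeffs

/-- For `q` a primitive `l`-th root of unity, `l` odd, and `0 ≤ k ≤ l`:
`a^(l-k) b^r c^s = q^(-k(r+s)) α b^r c^s d^k - Σ_{j=1}^k p_{k,j}(q) a^(l-k) b^(r+j) c^(s+j)`,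
where `α = a^l` is central. -/
theorem stmt12 (q : ℂ) (l : ℕ) (hq : IsPrimitiveRoot q l) (hl : Odd l)
    (k r s : ℕ) (hk : k ≤ l) :
    aq q ^ (l - k) * bq q ^ r * cq q ^ s =
      (q ^ (-(k * (r + s) : ℤ))) • (aq q ^ l * (bq q ^ r * cq q ^ s * dq q ^ k)) -
        ∑ j ∈ Finset.Icc 1 k,
          pcoef q k j • (aq q ^ (l - k) * bq q ^ (r + j) * cq q ^ (s + j)) := by
  induction k with
  | zero => simp [mul_assoc]
  | succ k ih =>
    have hq0 : q ≠ 0 := q_ne_zero' hq hl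
    have hkl : k + 1 ≤ l := hk
    have hdet : aq q * dq q - q • (bq q * cq q) = 1 := by
      rw [rel_det, add_sub_cancel_right]
    have hrs : bq q ^ r * cq q ^ s * aq q
        = (q ^ (r + s))⁻¹ • (aq q * (bq q ^ r * cq q ^ s)) := by
      rw [a_bc, smul_smul, inv_mul_cancel₀ (pow_ne_zero _ hq0), one_smul]
    have e1 : aq q ^ (l - (k + 1)) * bq q ^ r * cq q ^ s * (aq q * dq q)
        = (q ^ (r + s))⁻¹ • (aq q ^ (l - k) * bq q ^ r * cq q ^ s * dq q) := by
      have h2 : aq q ^ (l - (k + 1)) * (aq q * (bq q ^ r * cq q ^ s)) * dq q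
          = aq q ^ (l - k) * bq q ^ r * cq q ^ s * dq q := by
        rw [show l - k = (l - (k + 1)) + 1 from by omega, pow_succ]
        simp [mul_assoc]
      calc aq q ^ (l - (k + 1)) * bq q ^ r * cq q ^ s * (aq q * dq q)
          = aq q ^ (l - (k + 1)) * (bq q ^ r * cq q ^ s * aq q) * dq q := by
            simp [mul_assoc]
        _ = (q ^ (r + s))⁻¹ • (aq q ^ (l - (k + 1)) * (aq q * (bq q ^ r * cq q ^ s)) * dq q) := by
            rw [hrs, mul_smul_comm, smul_mul_assoc]
        _ = _ := by rw [h2]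
    have e2 : aq q ^ (l - (k + 1)) * bq q ^ r * cq q ^ s * (q • (bq q * cq q))
        = q • (aq q ^ (l - (k + 1)) * bq q ^ (r + 1) * cq q ^ (s + 1)) := by
      rw [mul_smul_comm]
      congr 1
      rw [pow_succ, pow_succ]
      simp only [mul_assoc]
      rw [← mul_assoc (cq q ^ s), c_pow_b, mul_assoc]
    have ihd : aq q ^ (l - k) * bq q ^ r * cq q ^ s * dq q
        = q ^ (-(k * (r + s) : ℤ)) • (aq q ^ l * (bq q ^ r * cq q ^ s * dq q ^ (k + 1)))
          - ∑ j ∈ Finset.Icc 1 k, pcoef q k j •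
              (q ^ (r + j + (s + j)) •
                  (aq q ^ (l - (k + 1)) * bq q ^ (r + j) * cq q ^ (s + j))
                + q ^ (r + j + (s + j) + 1) •
                  (aq q ^ (l - (k + 1)) * bq q ^ (r + j + 1) * cq q ^ (s + j + 1))) := by
      rw [ih (by omega), sub_mul, smul_mul_assoc, Finset.sum_mul]
      congr 1
      · congr 1
        rw [mul_assoc (aq q ^ l), mul_assoc (bq q ^ r * cq q ^ s), ← pow_succ]
      · refine Finset.sum_congr rfl fun j hj => ?_
        rw [smul_mul_assoc, step1 q hkl]
    calc aq q ^ (l - (k + 1)) * bq q ^ r * cq q ^ s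
        = aq q ^ (l - (k + 1)) * bq q ^ r * cq q ^ s * (aq q * dq q - q • (bq q * cq q)) := by
          rw [hdet, mul_one]
      _ = (q ^ (r + s))⁻¹ • (aq q ^ (l - k) * bq q ^ r * cq q ^ s * dq q)
            - q • (aq q ^ (l - (k + 1)) * bq q ^ (r + 1) * cq q ^ (s + 1)) := by
          rw [mul_sub, e1, e2]
      _ = _ := by
          rw [ihd]
          exact final_eq hq hl hkl r s _
            (fun j => aq q ^ (l - (k + 1)) * bq q ^ (r + j) * cq q ^ (s + j))
end
end
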